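/- Let G = (V, E) be a quasi-acyclic 2-path-bounded oriented graph without loops, multiple edges and triangles. Then for any two distinct edges e, e' ∈ E there exists a 3-vanishing commutative diagram D = (G, l) with values in a ring R (viewed as a multiplicative monoid) such that l(e)l(e') ≠ 0. -/

import Mathlib

/-- An oriented graph: finite nonempty sets of vertices and edges with
origin and tail maps. -/
structure OrientedGraph where
  V : Type
  E : Type
  [fintypeV : Fintype V]
  [fintypeE : Fintype E]
  [nonemptyV : Nonempty V]
  [nonemptyE : Nonempty E]
  o : E → V
  t : E → V

attribute [instance] OrientedGraph.fintypeV OrientedGraph.fintypeE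
  OrientedGraph.nonemptyV OrientedGraph.nonemptyE

namespace OrientedGraph

variable (G : OrientedGraph)

/-- `G.IsPath p u v` : the edge sequence `p` is a path from `u` to `v`
(consecutive edges are composable; paths of length 0 at any vertex are allowed). -/
def IsPath (p : List G.E) (u v : G.V) : Prop :=
  List.Chain' (fun e f => G.t e = G.o f) p ∧
  ((p = [] ∧ u = v) ∨
    ∃ h : p ≠ [], u = G.o (p.head h) ∧ v = G.t (p.getLast h))

/-- The label of an edge sequence: the product of the labels of its edges
(the empty sequence maps to `1`). -/
def labelProd {M : Type} [Monoid M] (l : G.E → M) (s : List G.E) : M :=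
  (s.map l).prod

/-- The diagram `(G, l)` is commutative: any two paths with the same origin and
the same tail have equal labels. -/
def IsCommutative {M : Type} [Monoid M] (l : G.E → M) : Prop :=
  ∀ (u v : G.V) (p₁ p₂ : List G.E),
    G.IsPath p₁ u v → G.IsPath p₂ u v → G.labelProd l p₁ = G.labelProd l p₂

/-- A complete system of relations for `G`: for every monoid `M` and every
labeling `l : E → M`, the diagram `(G, l)` is commutative iff all relations hold. -/
def IsComplete (R : Finset (List G.E × List G.E)) : Prop :=
  ∀ (M : Type) [Monoid M], ∀ l : G.E → M,
    G.IsCommutative l ↔ ∀ r ∈ R, G.labelProd l r.1 = G.labelProd l r.2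

/-- A minimal complete system of relations: no proper subset is complete. -/
def IsMinimalComplete (R : Finset (List G.E × List G.E)) : Prop :=
  G.IsComplete R ∧ ∀ R' : Finset (List G.E × List G.E), R' ⊂ R → ¬ G.IsComplete R'

/-- The commutativity rank `η(G)`: the minimal cardinality of a complete
system of relations for `G`. -/
noncomputable def eta : ℕ :=
  sInf {n : ℕ | ∃ R : Finset (List G.E × List G.E), G.IsComplete R ∧ R.card = n}

/-- `S'` is obtained from `S` by one multiplication. -/
def MulStep (S S' : Set (List G.E)) : Prop :=
  ∃ s ∈ S, ∃ s' ∈ S, S' = S ∪ {s ++ s'}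

/-- `G.mCost S S'` : the minimal number of multiplications needed to obtain `S'`
from `S` (`⊤` if impossible). -/
noncomputable def mCost (S S' : Set (List G.E)) : ℕ∞ :=
  sInf {k : ℕ∞ | ∃ n : ℕ, k = n ∧ ∃ f : ℕ → Set (List G.E),
    f 0 = S ∧ f n = S' ∧ ∀ i < n, G.MulStep (f i) (f (i + 1))}

/-- `S_R`: the set of all edge sequences appearing in the relations of `R`. -/
def relSet (R : Finset (List G.E × List G.E)) : Set (List G.E) :=
  {s | ∃ r ∈ R, s = r.1 ∨ s = r.2}

/-- `ℰ`: the empty sequence together with all one-edge sequences. -/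
def baseSet : Set (List G.E) :=
  {s | s = [] ∨ ∃ e : G.E, s = [e]}

/-- `m(R)`: the minimal number of multiplications needed to build all sequences
appearing in `R`, starting from `ℰ`. -/
noncomputable def mRel (R : Finset (List G.E × List G.E)) : ℕ∞ :=
  sInf {k : ℕ∞ | ∃ S : Set (List G.E), G.relSet R ⊆ S ∧ k = G.mCost G.baseSet S}

/-- The multiplication rank `ν(G)`. -/
noncomputable def nu : ℕ∞ :=
  sInf {k : ℕ∞ | ∃ R : Finset (List G.E × List G.E), G.IsComplete R ∧ k = G.mRel R}

/-- A 4-tuple of edges `(a, b, c, d)` forms a rhomboid. -/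
def IsRhomboid (r : G.E × G.E × G.E × G.E) : Prop :=
  G.o r.1 = G.o r.2.2.1 ∧ G.t r.2.1 = G.t r.2.2.2 ∧
  G.t r.1 = G.o r.2.1 ∧ G.t r.2.2.1 = G.o r.2.2.2 ∧
  G.o r.1 ≠ G.t r.1 ∧ G.o r.1 ≠ G.o r.2.2.2 ∧ G.o r.1 ≠ G.t r.2.2.2 ∧
  G.t r.1 ≠ G.o r.2.2.2 ∧ G.t r.1 ≠ G.t r.2.2.2 ∧ G.o r.2.2.2 ≠ G.t r.2.2.2

/-- Two rhomboids `(a, b, c, d)` and `(a', b', c', d')` are disjoint. -/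
def RhDisjoint (r r' : G.E × G.E × G.E × G.E) : Prop :=
  (r.1 ≠ r'.1 ∨ r.2.1 ≠ r'.2.1) ∧
  (r.1 ≠ r'.2.2.1 ∨ r.2.1 ≠ r'.2.2.2) ∧
  (r.2.2.1 ≠ r'.2.2.1 ∨ r.2.2.2 ≠ r'.2.2.2) ∧
  (r.2.2.1 ≠ r'.1 ∨ r.2.2.2 ≠ r'.2.1)

/-- `𝔯𝔥(G)`: the maximal cardinality of a family of pairwise disjoint rhomboids in `G`. -/
noncomputable def rhNum : ℕ :=
  sSup {n : ℕ | ∃ F : Finset (G.E × G.E × G.E × G.E),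
    (∀ r ∈ F, G.IsRhomboid r) ∧
    (∀ r ∈ F, ∀ r' ∈ F, r ≠ r' → G.RhDisjoint r r') ∧ F.card = n}

/-- `𝔏(G)`: the number of loops of `G`. -/
noncomputable def loopCount : ℕ :=
  Nat.card {e : G.E // G.o e = G.t e}

/-- `G` is quasi-acyclic: no directed cycle visiting two or more distinct vertices. -/
def QuasiAcyclic : Prop :=
  ∀ u v : G.V, u ≠ v →
    ∀ p q : List G.E, G.IsPath p u v → G.IsPath q v u → False

/-- `G` is 2-path-bounded: every oriented path avoiding loop edges has length at most 2. -/
def TwoPathBounded : Prop :=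
  ∀ (p : List G.E) (u v : G.V), G.IsPath p u v →
    (∀ e ∈ p, G.o e ≠ G.t e) → p.length ≤ 2

/-- `G` has a pair of multiple edges. -/
def HasMultipleEdges : Prop :=
  ∃ e e' : G.E, e ≠ e' ∧ G.t e = G.t e' ∧ G.o e = G.o e' ∧ G.t e ≠ G.o e

/-- `G` has a triangle. -/
def HasTriangle : Prop :=
  ∃ a b c : G.E, G.o a = G.o b ∧ G.t b = G.o c ∧ G.t c = G.t a ∧
    G.o a ≠ G.t a ∧ G.o b ≠ G.t b ∧ G.o c ≠ G.t c

/-- `G` has no loops. -/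
def NoLoops : Prop := ∀ e : G.E, G.o e ≠ G.t e

/-- Every edge occurring on either side of the relation `r` is a loop. -/
def AllLoops (r : List G.E × List G.E) : Prop :=
  (∀ e ∈ r.1, G.o e = G.t e) ∧ (∀ e ∈ r.2, G.o e = G.t e)

/-- Both sides of the relation `r` contain at least one non-loop edge. -/
def BothSidesNonLoop (r : List G.E × List G.E) : Prop :=
  (∃ e ∈ r.1, G.o e ≠ G.t e) ∧ (∃ e ∈ r.2, G.o e ≠ G.t e)

end OrientedGraph

/-- The triploid `T(n₁, n₂, n₃, n₀, e)`. -/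
def Triploid (n₁ n₂ n₃ n₀ e : ℕ) (hn₁ : 0 < n₁) (he : n₂ * (n₁ + n₃) ≤ e)
    (he₀ : 0 < e) : OrientedGraph where
  V := Fin n₀ ⊕ Fin n₁ ⊕ Fin n₂ ⊕ Fin n₃
  E := (Fin n₁ × Fin n₂) ⊕ (Fin n₂ × Fin n₃) ⊕ Fin (e - n₂ * (n₁ + n₃))
  nonemptyV := ⟨Sum.inr (Sum.inl ⟨0, hn₁⟩)⟩
  nonemptyE := by
    by_cases h : n₂ * (n₁ + n₃) < e
    · exact ⟨Sum.inr (Sum.inr ⟨0, by omega⟩)⟩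
    · have h2 : 0 < n₂ := by
        rcases Nat.eq_zero_or_pos n₂ with h0 | h0
        · exfalso; subst h0; simp at h; omega
        · exact h0
      exact ⟨Sum.inl (⟨0, hn₁⟩, ⟨0, h2⟩)⟩
  o := Sum.elim (fun p => Sum.inr (Sum.inl p.1))
        (Sum.elim (fun p => Sum.inr (Sum.inr (Sum.inl p.1)))
          (fun _ => Sum.inr (Sum.inl ⟨0, hn₁⟩)))
  t := Sum.elim (fun p => Sum.inr (Sum.inr (Sum.inl p.2)))
        (Sum.elim (fun p => Sum.inr (Sum.inr (Sum.inr p.2)))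
          (fun _ => Sum.inr (Sum.inl ⟨0, hn₁⟩)))


/-! ### Auxiliary constructions for the main theorem -/

open Classical in
noncomputable def labFun {V E : Type} (o t : E → V) (f : E) :
    Matrix (Fin 3) (Fin 3) ((V × V) → ℤ) :=
  Matrix.single 0 1 (fun p => if p.1 = o f then 1 else 0) +
  Matrix.single 1 2 (fun p => if p.2 = t f then 1 else 0)

open Classical in
theorem labFun_mul {V E : Type} (o t : E → V) (f g : E) :
    labFun o t f * labFun o t g =
      Matrix.single 0 2
        (fun p => if p.1 = o f ∧ p.2 = t g then 1 else 0) := by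
  have key : ((fun (p : V × V) => if p.1 = o f then (1:ℤ) else 0) *
      fun p => if p.2 = t g then 1 else 0) =
      fun p => if p.1 = o f ∧ p.2 = t g then 1 else 0 := by
    funext q
    by_cases h1 : q.1 = o f <;> by_cases h2 : q.2 = t g <;>
      simp [h1, h2, Pi.mul_apply]
  unfold labFun
  rw [add_mul, mul_add, mul_add]
  rw [Matrix.single_mul_single_of_ne (h := by decide),
    Matrix.single_mul_single_same,
    Matrix.single_mul_single_of_ne (h := by decide),
    Matrix.single_mul_single_of_ne (h := by decide)]
  rw [key]
  simp only [zero_add, add_zero]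

theorem labFun_triple {V E : Type} (o t : E → V) (f g h : E) :
    labFun o t f * labFun o t g * labFun o t h = 0 := by
  rw [labFun_mul]
  unfold labFun
  rw [mul_add,
    Matrix.single_mul_single_of_ne (h := by decide),
    Matrix.single_mul_single_of_ne (h := by decide), add_zero]

theorem labFun_mul_ne_zero {V E : Type} (o t : E → V) (f g : E) :
    labFun o t f * labFun o t g ≠ 0 := by
  rw [labFun_mul]
  intro h
  have := congrFun (congrFun (congrFun h 0) 2) (o f, t g)
  simp [Matrix.single_apply_same] at this

namespace OrientedGraph

/-- In a quasi-acyclic graph without loops, there is no nonempty path from a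
vertex to itself. -/
theorem no_nonempty_cycle (G : OrientedGraph) (hnl : G.NoLoops) (hqa : G.QuasiAcyclic)
    (p : List G.E) (u : G.V) (hp : p ≠ []) : ¬ G.IsPath p u u := by
  intro h
  obtain ⟨hch, hend⟩ := h
  rcases hend with ⟨hnil, _⟩ | ⟨hne, hu, hv⟩
  · exact hp hnil
  obtain ⟨f, rest, rfl⟩ := List.exists_cons_of_ne_nil hne
  simp only [List.head_cons] at hu
  rcases eq_or_ne rest [] with rfl | hr
  · simp only [List.getLast_singleton] at hv
    exact hnl f (hu ▸ hv ▸ rfl)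
  · have huw : u ≠ G.t f := by
      intro h'; exact hnl f (hu ▸ h' ▸ rfl)
    have hchain : List.Chain' (fun e f => G.t e = G.o f) rest :=
      (List.isChain_cons.mp hch).2
    have hhead : G.t f = G.o (rest.head hr) := by
      have := (List.isChain_cons.mp hch).1
      exact this _ (List.head?_eq_head hr ▸ rfl)
    have hlast : (f :: rest).getLast hne = rest.getLast hr :=
      List.getLast_cons hr
    refine hqa u (G.t f) huw [f] rest ?_ ?_
    · exact ⟨List.isChain_singleton f, Or.inr ⟨by simp, by simp [hu], by simp⟩⟩
    · exact ⟨hchain, Or.inr ⟨hr, hhead, by rw [← hlast, ← hv]⟩⟩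

end OrientedGraph


namespace OrientedGraph

theorem isPath_nil_iff (G : OrientedGraph) {u v : G.V} (h : G.IsPath [] u v) : u = v := by
  rcases h.2 with ⟨_, h⟩ | ⟨hne, _⟩
  · exact h
  · exact absurd rfl hne

theorem isPath_single (G : OrientedGraph) {a : G.E} {u v : G.V} (h : G.IsPath [a] u v) :
    u = G.o a ∧ v = G.t a := by
  rcases h.2 with ⟨h', _⟩ | ⟨hne, h1, h2⟩
  · simp at h'
  · simpa using And.intro h1 h2

theorem isPath_pair (G : OrientedGraph) {a b : G.E} {u v : G.V} (h : G.IsPath [a, b] u v) :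
    u = G.o a ∧ G.t a = G.o b ∧ v = G.t b := by
  obtain ⟨hch, hend⟩ := h
  have hab : G.t a = G.o b := by
    have := List.isChain_cons_cons.mp hch
    exact this.1
  rcases hend with ⟨h', _⟩ | ⟨hne, h1, h2⟩
  · simp at h'
  · refine ⟨by simpa using h1, hab, ?_⟩
    simpa [List.getLast] using h2

end OrientedGraph

/-- Theorem: for a quasi-acyclic, 2-path-bounded graph without loops, multiple edges
and triangles, and any distinct edges `e, e'`, there is a 3-vanishing commutative
diagram with values in a ring such that `l(e)·l(e') ≠ 0`. -/
theorem exists_three_vanishing_pair (G : OrientedGraph) (hnl : G.NoLoops) (hqa : G.QuasiAcyclic)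
    (hpb : G.TwoPathBounded) (hme : ¬ G.HasMultipleEdges) (htr : ¬ G.HasTriangle)
    (e e' : G.E) (hee : e ≠ e') :
    ∃ (R : Type) (_ : Ring R) (l : G.E → R),
      G.IsCommutative l ∧
      (∀ e₁ e₂ e₃ : G.E, l e₁ * l e₂ * l e₃ = 0) ∧
      l e * l e' ≠ 0 := by
  classical
  refine ⟨Matrix (Fin 3) (Fin 3) ((G.V × G.V) → ℤ), inferInstance, labFun G.o G.t,
    ?_, fun e₁ e₂ e₃ => labFun_triple G.o G.t e₁ e₂ e₃, labFun_mul_ne_zero G.o G.t e e'⟩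
  intro u v p₁ p₂ h₁ h₂
  have hlen₁ : p₁.length ≤ 2 := hpb p₁ u v h₁ (fun f _ => hnl f)
  have hlen₂ : p₂.length ≤ 2 := hpb p₂ u v h₂ (fun f _ => hnl f)
  have htri : ∀ (a b c : G.E) (w x : G.V), G.IsPath [a] w x → G.IsPath [b, c] w x → False := by
    intro a b c w x ha hbc
    obtain ⟨hw, hx⟩ := G.isPath_single ha
    obtain ⟨hw', hbc', hx'⟩ := G.isPath_pair hbc
    exact htr ⟨a, b, c, hw ▸ hw', hbc', by rw [← hx', ← hx], hnl a, hnl b, hnl c⟩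
  match p₁, hlen₁, p₂, hlen₂ with
  | [], _, [], _ => rfl
  | [], _, (f :: r), _ =>
    exact absurd ((G.isPath_nil_iff h₁) ▸ h₂)
      (G.no_nonempty_cycle hnl hqa (f :: r) u (by simp))
  | (f :: r), _, [], _ =>
    exact absurd ((G.isPath_nil_iff h₂) ▸ h₁)
      (G.no_nonempty_cycle hnl hqa (f :: r) u (by simp))
  | [a], _, [a'], _ =>
    obtain ⟨hu, hv⟩ := G.isPath_single h₁
    obtain ⟨hu', hv'⟩ := G.isPath_single h₂
    rcases eq_or_ne a a' with rfl | hne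
    · rfl
    · exact absurd ⟨a, a', hne, by rw [← hv, ← hv'], by rw [← hu, ← hu'],
        fun h => hnl a h.symm⟩ hme
  | [a], _, [b, c], _ => exact absurd (htri a b c u v h₁ h₂) id
  | [b, c], _, [a], _ => exact absurd (htri a b c u v h₂ h₁) id
  | [a, b], _, [a', b'], _ =>
    obtain ⟨hu, _, hv⟩ := G.isPath_pair h₁
    obtain ⟨hu', _, hv'⟩ := G.isPath_pair h₂
    show (List.map (labFun G.o G.t) [a, b]).prod = (List.map (labFun G.o G.t) [a', b']).prod
    simp only [List.map_cons, List.map_nil, List.prod_cons, List.prod_nil, mul_one]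
    rw [labFun_mul, labFun_mul, ← hu, ← hv, ← hu', ← hv']
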